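/- The functions t₃ and s = (1 − t₃²Y₃)^{1/t₃²}(Y₃ − X₃²) are functionally independent first integrals of the 2-form σ̃₃: wherever defined (t₃ ≠ 0, |t₃²Y₃| < 1), one has ds ∧ dt₃ = c·σ̃₃ for a nonvanishing function c; in particular the kernel directions of σ̃₃ are tangent to the level sets {t₃ = const, s = const}. -/

import Mathlib

/-- for `t₃ ≠ 0`, `|t₃²Y₃| < 1`, the functions `t₃` and
`s = (1-t₃²Y₃)^{1/t₃²}(Y₃-X₃²)` are first integrals of
`σ̃₃ = 4X₃(1-t₃²Y₃)dt₃∧dX₃ − 2(1+X₃²−Y₃−t₃²Y₃)dt₃∧dY₃`: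
`ds ∧ dt₃ = c · σ̃₃` with the nonvanishing factor
`c = ½(1-t₃²Y₃)^{1/t₃²-1}`, i.e. the coefficients of `ds∧dt₃` in the basis
`dt₃∧dX₃`, `dt₃∧dY₃` (which are `-∂s/∂X₃`, `-∂s/∂Y₃`) are `c` times the
corresponding coefficients of `σ̃₃`. -/
theorem stmt17 (t₃ X₃ Y₃ : ℝ) (ht : t₃ ≠ 0) (h : |t₃ ^ 2 * Y₃| < 1)
    (s : ℝ → ℝ → ℝ → ℝ)
    (hs : ∀ t X Y, s t X Y = (1 - t ^ 2 * Y) ^ ((1 : ℝ) / t ^ 2) * (Y - X ^ 2))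
    (c : ℝ) (hc : c = (1 / 2) * (1 - t₃ ^ 2 * Y₃) ^ ((1 : ℝ) / t₃ ^ 2 - 1)) :
    c ≠ 0 ∧
    -(deriv (fun X => s t₃ X Y₃) X₃) = c * (4 * X₃ * (1 - t₃ ^ 2 * Y₃)) ∧
    -(deriv (fun Y => s t₃ X₃ Y) Y₃)
      = c * (-(2 * (1 + X₃ ^ 2 - Y₃ - t₃ ^ 2 * Y₃))) := by
  have h1 : t₃ ^ 2 * Y₃ < 1 := (abs_lt.mp h).2
  have ha : (0:ℝ) < 1 - t₃ ^ 2 * Y₃ := by linarith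
  have hane : (1 - t₃ ^ 2 * Y₃) ≠ 0 := ne_of_gt ha
  have hsplit : (1 - t₃ ^ 2 * Y₃) ^ ((1:ℝ) / t₃ ^ 2)
      = (1 - t₃ ^ 2 * Y₃) ^ ((1:ℝ) / t₃ ^ 2 - 1) * (1 - t₃ ^ 2 * Y₃) := by
    rw [← Real.rpow_add_one hane]; ring_nf
  have hc0 : c ≠ 0 := by
    rw [hc]
    positivity
  refine ⟨hc0, ?_, ?_⟩
  · have heq : (fun X => s t₃ X Y₃)
        = fun X => (1 - t₃ ^ 2 * Y₃) ^ ((1:ℝ) / t₃ ^ 2) * (Y₃ - X ^ 2) := by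
      funext X; rw [hs]
    rw [heq, deriv_const_mul _ (by fun_prop)]
    have hd : deriv (fun X : ℝ => Y₃ - X ^ 2) X₃ = -(2 * X₃) := by
      have := ((hasDerivAt_pow 2 X₃).const_sub Y₃).deriv
      simp at this
      simp [this]
    rw [hd, hc, hsplit]; ring
  · have hlin : HasDerivAt (fun Y : ℝ => 1 - t₃ ^ 2 * Y) (-t₃ ^ 2) Y₃ := by
      simpa [Pi.sub_def] using (hasDerivAt_const Y₃ (1:ℝ)).sub ((hasDerivAt_id Y₃).const_mul (t₃ ^ 2))
    have hpow : HasDerivAt (fun Y : ℝ => (1 - t₃ ^ 2 * Y) ^ ((1:ℝ) / t₃ ^ 2))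
        (((1:ℝ) / t₃ ^ 2) * (1 - t₃ ^ 2 * Y₃) ^ ((1:ℝ) / t₃ ^ 2 - 1) * (-t₃ ^ 2)) Y₃ := by
      have := (Real.hasDerivAt_rpow_const (x := 1 - t₃ ^ 2 * Y₃)
        (p := (1:ℝ) / t₃ ^ 2) (Or.inl hane)).comp Y₃ hlin
      simpa [Function.comp, Function.comp_def, mul_comm, mul_assoc, mul_left_comm] using this
    have hprod : HasDerivAt (fun Y : ℝ => (1 - t₃ ^ 2 * Y) ^ ((1:ℝ) / t₃ ^ 2) * (Y - X₃ ^ 2))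
        (((1:ℝ) / t₃ ^ 2) * (1 - t₃ ^ 2 * Y₃) ^ ((1:ℝ) / t₃ ^ 2 - 1) * (-t₃ ^ 2) * (Y₃ - X₃ ^ 2)
          + (1 - t₃ ^ 2 * Y₃) ^ ((1:ℝ) / t₃ ^ 2) * 1) Y₃ :=
      hpow.mul ((hasDerivAt_id Y₃).sub_const _)
    have heq : (fun Y => s t₃ X₃ Y)
        = fun Y => (1 - t₃ ^ 2 * Y) ^ ((1:ℝ) / t₃ ^ 2) * (Y - X₃ ^ 2) := by
      funext Y; rw [hs]
    rw [heq, hprod.deriv, hc, hsplit]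
    have ht2 : (t₃ : ℝ) ^ 2 ≠ 0 := pow_ne_zero 2 ht
    field_simp
    ring
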